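/- In the supercritical case (r_n → 0 and p_n → 0), the ratio r_{n+1}/r_n converges to 1/m as n → ∞. -/
import Mathlib

open Filter Finset Topology

/-- For the Derrida–Retaux parameter recursion, in the
supercritical case (`r_n → 0` and `p_n → 0`), the ratio `r_{n+1}/r_n`
converges to `1/m` as `n → ∞`. -/
theorem stmt8 (m : ℝ) (hm : 1 < m) (r p : ℕ → ℝ)
    (hmem : ∀ n, r n ∈ Set.Ioo (0 : ℝ) 1 ∧ p n ∈ Set.Ioo (0 : ℝ) 1)
    (hrec_r : ∀ n, r (n + 1) = r n / (m - (m - 1) * p n))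
    (hrec_p : ∀ n, p (n + 1) = 1 - (1 - r (n + 1)) * (1 - r (n + 1) * p n / r n))
    (hrlim : Tendsto r atTop (𝓝 0)) (hplim : Tendsto p atTop (𝓝 0)) :
    Tendsto (fun n => r (n + 1) / r n) atTop (𝓝 (1 / m)) := by
  have hden : Tendsto (fun n => m - (m - 1) * p n) atTop (𝓝 m) := by
    have : Tendsto (fun n => m - (m - 1) * p n) atTop (𝓝 (m - (m - 1) * 0)) :=
      (tendsto_const_nhds.sub (tendsto_const_nhds.mul hplim))
    simpa using this
  have hlim : Tendsto (fun n => 1 / (m - (m - 1) * p n)) atTop (𝓝 (1 / m)) :=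
    tendsto_const_nhds.div hden (by linarith)
  refine hlim.congr fun n => ?_
  have hr0 : r n ≠ 0 := ne_of_gt (hmem n).1.1
  have hd0 : m - (m - 1) * p n ≠ 0 := by
    have hp1 := (hmem n).2.2
    have hp0 := (hmem n).2.1
    nlinarith
  rw [hrec_r n]
  field_simp
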